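/- (Concentration of occupied bins) If t_n = 2^{⌈na⌉}, s_n = 2^{⌈nb⌉} with b > a > 0, and N_n is the number of occupied bins after throwing s_n balls uniformly and independently into t_n bins, then for every ε > 0, P(N_n / t_n < 1 − ε) → 0 as n → ∞. -/

import Mathlib

open Finset Filter

/-- Number of bins receiving at least one ball. -/
def occupiedBins (s t : ℕ) (ω : Fin s → Fin t) : ℕ :=
  (Finset.univ.filter (fun b : Fin t => ∃ i, ω i = b)).card

lemma occupiedBins_eq_image (s t : ℕ) (ω : Fin s → Fin t) :
    occupiedBins s t ω = (Finset.image ω Finset.univ).card := by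
  unfold occupiedBins
  congr 1
  ext b
  simp [eq_comm]

lemma card_range_subset (s t : ℕ) (S : Finset (Fin t)) :
    (Finset.univ.filter (fun ω : Fin s → Fin t => ∀ i, ω i ∈ S)).card = S.card ^ s := by
  rw [← Fintype.card_subtype]
  have e : {ω : Fin s → Fin t // ∀ i, ω i ∈ S} ≃ (Fin s → {x // x ∈ S}) :=
    { toFun := fun ω i => ⟨ω.1 i, ω.2 i⟩
      invFun := fun f => ⟨fun i => (f i).1, fun i => (f i).2⟩
      left_inv := fun ω => rfl
      right_inv := fun f => rfl }
  rw [Fintype.card_congr e, Fintype.card_fun, Fintype.card_coe, Fintype.card_fin]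

lemma count_bad_le (s t m : ℕ) (hm : m ≤ t) :
    (Finset.univ.filter (fun ω : Fin s → Fin t => occupiedBins s t ω ≤ m)).card
      ≤ 2 ^ t * m ^ s := by
  have hsub : (Finset.univ.filter (fun ω : Fin s → Fin t => occupiedBins s t ω ≤ m)) ⊆
      (Finset.powersetCard m (Finset.univ : Finset (Fin t))).biUnion
        (fun S => Finset.univ.filter (fun ω : Fin s → Fin t => ∀ i, ω i ∈ S)) := by
    intro ω hω
    rw [Finset.mem_filter, occupiedBins_eq_image] at hω
    obtain ⟨S, hSsub, hSsub', hScard⟩ :=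
      Finset.exists_subsuperset_card_eq (Finset.subset_univ (Finset.image ω Finset.univ))
        hω.2 (by simpa using hm)
    refine Finset.mem_biUnion.2 ⟨S, ?_, ?_⟩
    · exact Finset.mem_powersetCard.2 ⟨hSsub', hScard⟩
    · refine Finset.mem_filter.2 ⟨Finset.mem_univ _, fun i => ?_⟩
      exact hSsub (Finset.mem_image_of_mem ω (Finset.mem_univ i))
  calc (Finset.univ.filter (fun ω : Fin s → Fin t => occupiedBins s t ω ≤ m)).card
      ≤ ((Finset.powersetCard m (Finset.univ : Finset (Fin t))).biUnion
          (fun S => Finset.univ.filter (fun ω : Fin s → Fin t => ∀ i, ω i ∈ S))).card :=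
        Finset.card_le_card hsub
    _ ≤ ∑ S ∈ Finset.powersetCard m (Finset.univ : Finset (Fin t)),
          (Finset.univ.filter (fun ω : Fin s → Fin t => ∀ i, ω i ∈ S)).card :=
        Finset.card_biUnion_le
    _ ≤ ∑ _S ∈ Finset.powersetCard m (Finset.univ : Finset (Fin t)), m ^ s := by
        refine Finset.sum_le_sum fun S hS => ?_
        rw [card_range_subset]
        exact Nat.pow_le_pow_left (le_of_eq (Finset.mem_powersetCard.1 hS).2) s
    _ = t.choose m * m ^ s := by
        rw [Finset.sum_const, Finset.card_powersetCard, Finset.card_univ, Fintype.card_fin,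
          smul_eq_mul]
    _ ≤ 2 ^ t * m ^ s := by
        refine Nat.mul_le_mul_right _ ?_
        calc t.choose m ≤ ∑ i ∈ Finset.range (t + 1), t.choose i :=
              Finset.single_le_sum (fun i _ => Nat.zero_le _)
                (Finset.mem_range.2 (Nat.lt_succ_of_le hm))
          _ = 2 ^ t := Nat.sum_range_choose t

lemma prob_bad_le (s t : ℕ) (ht : 0 < t) (ε c : ℝ) (hc0 : 0 < c) (hc1 : c ≤ 1)
    (hεc : 1 - ε ≤ c) :
    (((Finset.univ.filter
        (fun ω : Fin s → Fin t =>
          (occupiedBins _ _ ω : ℝ) / (t : ℕ) < 1 - ε)).card : ℝ)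
      / ((t : ℕ) : ℝ) ^ (s : ℕ)) ≤ 2 ^ t * c ^ s := by
  have hTpos : (0:ℝ) < (t : ℝ) := by exact_mod_cast ht
  set m : ℕ := ⌊c * t⌋₊ with hmdef
  have hmT : m ≤ t := by
    have h1 : c * t ≤ (t : ℝ) := by nlinarith
    calc m ≤ ⌊(t : ℝ)⌋₊ := Nat.floor_le_floor h1
      _ = t := Nat.floor_natCast _
  have hsubset : (Finset.univ.filter
        (fun ω : Fin s → Fin t => (occupiedBins _ _ ω : ℝ) / (t : ℕ) < 1 - ε))
      ⊆ (Finset.univ.filter (fun ω : Fin s → Fin t => occupiedBins _ _ ω ≤ m)) := by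
    intro ω hω'
    rw [Finset.mem_filter] at hω' ⊢
    refine ⟨hω'.1, ?_⟩
    have hω := hω'.2
    have h1 : (occupiedBins _ _ ω : ℝ) / (t : ℕ) < c := lt_of_lt_of_le hω hεc
    have h2 : (occupiedBins _ _ ω : ℝ) < c * t := by
      rw [div_lt_iff₀ hTpos] at h1; linarith
    exact Nat.le_floor h2.le
  have hcard := (Finset.card_le_card hsubset).trans (count_bad_le s t m hmT)
  have hnum : (((Finset.univ.filter
        (fun ω : Fin s → Fin t =>
          (occupiedBins _ _ ω : ℝ) / (t : ℕ) < 1 - ε)).card : ℝ))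
      ≤ 2 ^ t * (m:ℝ) ^ s := by
    calc (((Finset.univ.filter
          (fun ω : Fin s → Fin t =>
            (occupiedBins _ _ ω : ℝ) / (t : ℕ) < 1 - ε)).card : ℝ))
        ≤ ((2 ^ t * m ^ s : ℕ) : ℝ) := by exact_mod_cast hcard
      _ = 2 ^ t * (m:ℝ) ^ s := by push_cast; ring
  have hTS : (0:ℝ) < ((t : ℕ) : ℝ) ^ s := by positivity
  rw [div_le_iff₀ hTS]
  calc (((Finset.univ.filter
        (fun ω : Fin s → Fin t =>
          (occupiedBins _ _ ω : ℝ) / (t : ℕ) < 1 - ε)).card : ℝ))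
      ≤ 2 ^ t * (m:ℝ) ^ s := hnum
    _ ≤ 2 ^ t * (c * t) ^ s := by
        have hm : (m:ℝ) ≤ c * t := Nat.floor_le (by positivity)
        have h3 : (m:ℝ) ^ s ≤ (c * t) ^ s := pow_le_pow_left₀ (Nat.cast_nonneg m) hm _
        nlinarith [pow_pos (show (0:ℝ) < 2 by norm_num) t]
    _ = 2 ^ t * c ^ s * ((t : ℕ) : ℝ) ^ s := by rw [mul_pow]; push_cast; ring

lemma bound_tendsto (a b : ℝ) (ha : 0 < a) (hab : a < b) (c : ℝ) (hc0 : 0 ≤ c) (hc1 : c < 1) :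
    Tendsto (fun n : ℕ => (2:ℝ) ^ (2 ^ ⌈(n : ℝ) * a⌉₊) * c ^ (2 ^ ⌈(n : ℝ) * b⌉₊))
      atTop (nhds 0) := by
  -- ⌈n a⌉ → ∞
  have hca : Tendsto (fun n : ℕ => ⌈(n : ℝ) * a⌉₊) atTop atTop := by
    refine tendsto_atTop.2 fun K => ?_
    have hna : Tendsto (fun n : ℕ => (n : ℝ) * a) atTop atTop :=
      Tendsto.atTop_mul_const ha tendsto_natCast_atTop_atTop
    filter_upwards [tendsto_atTop.1 hna K] with n hn
    have : (K : ℝ) ≤ (⌈(n : ℝ) * a⌉₊ : ℝ) := hn.trans (Nat.le_ceil _)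
    exact_mod_cast this
  have hTtop : Tendsto (fun n : ℕ => 2 ^ ⌈(n : ℝ) * a⌉₊) atTop atTop :=
    tendsto_atTop_mono (fun n => (Nat.lt_two_pow_self).le) hca
  -- gap d n → ∞
  have hd : Tendsto (fun n : ℕ => ⌈(n : ℝ) * b⌉₊ - ⌈(n : ℝ) * a⌉₊) atTop atTop := by
    refine tendsto_atTop.2 fun K => ?_
    have hgap : Tendsto (fun n : ℕ => (n : ℝ) * (b - a)) atTop atTop :=
      Tendsto.atTop_mul_const (by linarith) tendsto_natCast_atTop_atTop
    filter_upwards [tendsto_atTop.1 hgap ((K : ℝ) + 1)] with n hn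
    have hna0 : (0:ℝ) ≤ (n : ℝ) * a := by positivity
    have hceil : (⌈(n : ℝ) * a⌉₊ : ℝ) < (n : ℝ) * a + 1 := Nat.ceil_lt_add_one hna0
    have h1 : (⌈(n : ℝ) * a⌉₊ : ℝ) + K ≤ (n : ℝ) * b := by nlinarith
    have h2 : ⌈(n : ℝ) * a⌉₊ + K ≤ ⌈(n : ℝ) * b⌉₊ := by
      have : ((⌈(n : ℝ) * a⌉₊ + K : ℕ) : ℝ) ≤ (n : ℝ) * b := by push_cast; linarith
      calc ⌈(n : ℝ) * a⌉₊ + K = ⌈((⌈(n : ℝ) * a⌉₊ + K : ℕ) : ℝ)⌉₊ := (Nat.ceil_natCast _).symm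
        _ ≤ ⌈(n : ℝ) * b⌉₊ := Nat.ceil_le_ceil this
    omega
  have h2d : Tendsto (fun n : ℕ => 2 ^ (⌈(n : ℝ) * b⌉₊ - ⌈(n : ℝ) * a⌉₊)) atTop atTop :=
    tendsto_atTop_mono (fun n => (Nat.lt_two_pow_self).le) hd
  have hcp : Tendsto (fun n : ℕ => c ^ (2 ^ (⌈(n : ℝ) * b⌉₊ - ⌈(n : ℝ) * a⌉₊))) atTop (nhds 0) :=
    (tendsto_pow_atTop_nhds_zero_of_lt_one hc0 hc1).comp h2d
  -- eventually the bound is ≤ (1/2)^(T n)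
  have hev : ∀ᶠ n : ℕ in atTop,
      (2:ℝ) ^ (2 ^ ⌈(n : ℝ) * a⌉₊) * c ^ (2 ^ ⌈(n : ℝ) * b⌉₊)
        ≤ ((1:ℝ)/2) ^ (2 ^ ⌈(n : ℝ) * a⌉₊) := by
    filter_upwards [(hcp.eventually_lt_const (show (0:ℝ) < 1/4 by norm_num))] with n hn
    have hle : ⌈(n : ℝ) * a⌉₊ ≤ ⌈(n : ℝ) * b⌉₊ :=
      Nat.ceil_le_ceil (by nlinarith [Nat.cast_nonneg (α := ℝ) n])
    have hsplit : (2:ℕ) ^ ⌈(n : ℝ) * b⌉₊ =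
        2 ^ (⌈(n : ℝ) * b⌉₊ - ⌈(n : ℝ) * a⌉₊) * 2 ^ ⌈(n : ℝ) * a⌉₊ := by
      rw [← pow_add]
      congr 1
      omega
    have key : (2:ℝ) ^ (2 ^ ⌈(n : ℝ) * a⌉₊) * c ^ (2 ^ ⌈(n : ℝ) * b⌉₊)
        = (2 * c ^ (2 ^ (⌈(n : ℝ) * b⌉₊ - ⌈(n : ℝ) * a⌉₊))) ^ (2 ^ ⌈(n : ℝ) * a⌉₊) := by
      rw [mul_pow, ← pow_mul, hsplit]
    rw [key]
    have h1 : 2 * c ^ (2 ^ (⌈(n : ℝ) * b⌉₊ - ⌈(n : ℝ) * a⌉₊)) ≤ 1/2 := by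
      have := hn.le; nlinarith
    have h0 : 0 ≤ 2 * c ^ (2 ^ (⌈(n : ℝ) * b⌉₊ - ⌈(n : ℝ) * a⌉₊)) := by positivity
    exact pow_le_pow_left₀ h0 h1 _
  have hhalf : Tendsto (fun n : ℕ => ((1:ℝ)/2) ^ (2 ^ ⌈(n : ℝ) * a⌉₊)) atTop (nhds 0) :=
    (tendsto_pow_atTop_nhds_zero_of_lt_one (by norm_num) (by norm_num)).comp hTtop
  refine squeeze_zero' ?_ hev hhalf
  filter_upwards with n
  positivity

/-- Concentration of occupied bins: with `t_n = 2^{⌈na⌉}` bins and `s_n = 2^{⌈nb⌉}` balls,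
`b > a > 0`, the fraction of occupied bins is below `1 − ε` with probability tending to `0`.
Probability is the fraction of the `t_n^{s_n}` equally likely placements. -/
theorem occupied_bins_concentration (a b : ℝ) (ha : 0 < a) (hab : a < b) (ε : ℝ) (hε : 0 < ε) :
    Tendsto
      (fun n : ℕ =>
        (((Finset.univ.filter
            (fun ω : Fin (2 ^ ⌈(n : ℝ) * b⌉₊) → Fin (2 ^ ⌈(n : ℝ) * a⌉₊) =>
              (occupiedBins _ _ ω : ℝ) / (2 ^ ⌈(n : ℝ) * a⌉₊ : ℕ) < 1 - ε)).card : ℝ)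
          / ((2 ^ ⌈(n : ℝ) * a⌉₊ : ℕ) : ℝ) ^ (2 ^ ⌈(n : ℝ) * b⌉₊ : ℕ)))
      atTop (nhds 0) := by
  set c : ℝ := 1 - min ε (1/2) with hcdef
  have hc0 : (0:ℝ) < c := by
    have h := min_le_right ε (1/2)
    simp only [hcdef]; linarith
  have hc1 : c < 1 := by
    have h : (0:ℝ) < min ε (1/2) := lt_min hε (by norm_num)
    simp only [hcdef]; linarith
  have hεc : 1 - ε ≤ c := by
    have h := min_le_left ε (1/2)
    simp only [hcdef]; linarith
  refine squeeze_zero (fun n => by positivity) (fun n => ?_)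
    (bound_tendsto a b ha hab c hc0.le hc1)
  exact prob_bad_le _ _ (by positivity) ε c hc0 hc1.le hεc
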